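/- (Reproducing property of the slice normalized Szegő kernel.) Let c : ℕ → ℍ with Σ_n |c_n| < ∞. Then for every a ∈ 𝔹 and every I ∈ 𝕊: (1/2π) ∫₀^{2π} conj(e_a(e^{It})) · F_c(e^{It}) dt = √(1−|a|²) · F_c(a), where e_a(e^{It}) := √(1−|a|²) Σ_n e^{Int} conj(a)^n. In particular the value is independent of I, and a need not lie in the slice ℂ_I. -/

import Mathlib

noncomputable section

local notation "ℍ" => Quaternion ℝ

/-- The power series function `F_c(q) = Σ_n q^n c_n` associated to a coefficient
sequence `c : ℕ → ℍ`. -/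
def Fc (c : ℕ → ℍ) (q : ℍ) : ℍ := ∑' n, q ^ n * c n

/-- Cauchy product `(b ⋆ c)_n = Σ_{k=0}^n b_k c_{n-k}` of coefficient sequences,
i.e. the coefficient sequence of the slice `*`-product. -/
def cprod (b c : ℕ → ℍ) : ℕ → ℍ := fun n => ∑ k ∈ Finset.range (n + 1), b k * c (n - k)

/-- Coefficient sequence `ε(a)_n = √(1-|a|²) conj(a)^n` of the slice normalized
Szegő kernel `e_a`. -/
def eps (a : ℍ) : ℕ → ℍ := fun n => Real.sqrt (1 - ‖a‖ ^ 2) • (star a) ^ n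

open scoped Classical in
/-- Coefficient sequence `β(a)` of the slice Blaschke factor `B_a`:
`β(a)_0 = a²/|a|`, `β(a)_n = -conj(a)^{n-1}(1-|a|²)(a/|a|)` for `n ≥ 1`,
with the convention `β(0)_n = 1` iff `n = 1` (that is, `B_0(q) = q`). -/
def betaC (a : ℍ) : ℕ → ℍ :=
  if a = 0 then fun n => if n = 1 then 1 else 0
  else fun n =>
    if n = 0 then a ^ 2 / (‖a‖ : ℍ)
    else -((star a) ^ (n - 1) * ((1 - ‖a‖ ^ 2 : ℝ) : ℍ) * (a / (‖a‖ : ℍ)))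

/-- The identity for the Cauchy product: coefficient sequence of the constant `1`. -/
def deltaSeq : ℕ → ℍ := fun n => if n = 0 then 1 else 0

/-- Coefficient sequence of the Blaschke product `B_{a_0} * ⋯ * B_{a_{k-1}}`
(0-indexed; `Bprod a 0` is the empty product, i.e. the constant `1`). -/
def Bprod (a : ℕ → ℍ) : ℕ → (ℕ → ℍ)
  | 0 => deltaSeq
  | k + 1 => cprod (Bprod a k) (betaC (a k))

/-- Coefficient sequence of the `k`-th slice Takenaka–Malmquist function
`T_{k+1} = B_{a_0} * ⋯ * B_{a_{k-1}} * e_{a_k}` (0-indexed). -/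
def tau (a : ℕ → ℍ) (k : ℕ) : ℕ → ℍ := cprod (Bprod a k) (eps (a k))

/-- `e^{It} = cos t + I sin t`. -/
def expI (I : ℍ) (t : ℝ) : ℍ := ((Real.cos t : ℝ) : ℍ) + ((Real.sin t : ℝ) : ℍ) * I

/-! ### Auxiliary lemmas -/

section Aux

variable {I : ℍ}

lemma aux_smul_one (r : ℝ) : r • (1:ℍ) = ↑r := by
  rw [← Quaternion.coe_one, Quaternion.smul_coe, mul_one]

lemma star_real_smul (r : ℝ) (q : ℍ) : star (r • q) = r • star q := by
  rw [← Quaternion.coe_mul_eq_smul, star_mul, Quaternion.star_coe,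
    Quaternion.mul_coe_eq_smul]

lemma norm_I (hI : I ^ 2 = -1) : ‖I‖ = 1 := by
  have h : ‖I‖ ^ 2 = 1 := by rw [← norm_pow, hI]; simp
  nlinarith [norm_nonneg I]

lemma star_I (hI : I ^ 2 = -1) : star I = -I := by
  rw [Quaternion.star_eq_neg]
  refine (Quaternion.sq_eq_neg_normSq).1 ?_
  have h1 : Quaternion.normSq I = 1 := by
    have := Quaternion.normSq_eq_norm_mul_self I
    rw [norm_I hI] at this; simp [this]
  rw [hI, h1]; simp

lemma expI_def' (t : ℝ) : expI I t = Real.cos t • (1:ℍ) + Real.sin t • I := by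
  simp [expI, Quaternion.coe_mul_eq_smul, aux_smul_one]

lemma expI_mul (hI : I ^ 2 = -1) (s t : ℝ) : expI I s * expI I t = expI I (s + t) := by
  have h2 : I * I = -1 := by rw [← sq, hI]
  simp only [expI_def', Real.cos_add, Real.sin_add, add_mul, mul_add, smul_mul_assoc,
    mul_smul_comm, one_mul, mul_one, h2, smul_smul, smul_neg]
  module

lemma expI_zero : expI I 0 = 1 := by simp [expI]

lemma star_expI (hI : I ^ 2 = -1) (t : ℝ) : star (expI I t) = expI I (-t) := by
  simp [expI, star_I hI, Quaternion.coe_commutes]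

lemma expI_pow (hI : I ^ 2 = -1) (t : ℝ) (n : ℕ) : expI I t ^ n = expI I (n * t) := by
  induction n with
  | zero => simp [expI_zero]
  | succ n ih =>
    rw [pow_succ, ih, expI_mul hI]
    push_cast; ring_nf

lemma norm_expI (hI : I ^ 2 = -1) (t : ℝ) : ‖expI I t‖ = 1 := by
  have h : expI I t * star (expI I t) = 1 := by
    rw [star_expI hI, expI_mul hI]; simp [expI_zero]
  have := congrArg norm h
  rw [norm_mul, Quaternion.norm_star, norm_one, ← sq] at this
  nlinarith [norm_nonneg (expI I t)]

lemma cont_expI : Continuous (fun t => expI I t) := by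
  simp only [expI_def']
  exact (Real.continuous_cos.smul continuous_const).add (Real.continuous_sin.smul continuous_const)

open Real intervalIntegral in
lemma integral_expI (I : ℍ) (k : ℤ) :
    (∫ t in (0:ℝ)..(2*π), expI I (k * t)) = if k = 0 then ((2*π:ℝ):ℍ) else 0 := by
  simp only [expI_def']
  have h1 : IntervalIntegrable (fun t => Real.cos ((k:ℝ)*t) • (1:ℍ))
      MeasureTheory.volume 0 (2*π) := by
    apply Continuous.intervalIntegrable; fun_prop
  have h2 : IntervalIntegrable (fun t => Real.sin ((k:ℝ)*t) • I)
      MeasureTheory.volume 0 (2*π) := by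
    apply Continuous.intervalIntegrable; fun_prop
  rw [integral_add h1 h2,
    intervalIntegral.integral_smul_const, intervalIntegral.integral_smul_const]
  have hcos : (∫ t in (0:ℝ)..(2*π), Real.cos ((k:ℝ)*t)) = if k = 0 then 2*π else 0 := by
    rcases eq_or_ne k 0 with rfl | hk
    · simp
    · have hk' : (k:ℝ) ≠ 0 := Int.cast_ne_zero.mpr hk
      rw [if_neg hk, integral_comp_mul_left _ hk', integral_cos]
      have h1 : Real.sin ((k:ℝ)*(2*π)) = 0 := by
        have : (k:ℝ)*(2*π) = (2*k : ℤ) * π := by push_cast; ring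
        rw [this, Real.sin_int_mul_pi]
      simp [h1]
  have hsin : (∫ t in (0:ℝ)..(2*π), Real.sin ((k:ℝ)*t)) = 0 := by
    rcases eq_or_ne k 0 with rfl | hk
    · simp
    · have hk' : (k:ℝ) ≠ 0 := Int.cast_ne_zero.mpr hk
      rw [integral_comp_mul_left _ hk', integral_sin]
      simp [Real.cos_int_mul_two_pi]
  rw [hcos, hsin]
  rcases eq_or_ne k 0 with rfl | hk
  · simp [aux_smul_one, Quaternion.coe_mul]
  · simp [hk]

end Aux

set_option maxHeartbeats 1000000 in
/-- reproducing property of the slice normalized Szegő kernel. -/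
theorem szego_reproducing (c : ℕ → ℍ) (hc : Summable fun n => ‖c n‖)
    (a : ℍ) (ha : ‖a‖ < 1) (I : ℍ) (hI : I ^ 2 = -1) :
    (2 * Real.pi)⁻¹ •
        ∫ t in (0 : ℝ)..(2 * Real.pi),
          star (Real.sqrt (1 - ‖a‖ ^ 2) • ∑' n : ℕ, expI I (n * t) * (star a) ^ n) *
            Fc c (expI I t)
      = Real.sqrt (1 - ‖a‖ ^ 2) • Fc c a := by
  set s := Real.sqrt (1 - ‖a‖ ^ 2) with hs
  have hπ : (0:ℝ) < 2 * Real.pi := by positivity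
  have hgeo : Summable (fun n : ℕ => ‖a‖ ^ n) :=
    summable_geometric_of_lt_one (norm_nonneg a) ha
  have hprod : Summable (fun z : ℕ × ℕ => ‖a‖ ^ z.1 * ‖c z.2‖) :=
    hgeo.mul_of_nonneg hc (fun n => pow_nonneg (norm_nonneg a) n) (fun m => norm_nonneg _)
  set g : ℕ × ℕ → ℝ → ℍ :=
    fun z t => a ^ z.1 * expI I ((((z.2 : ℤ) - (z.1 : ℤ) : ℤ) : ℝ) * t) * c z.2 with hg
  have hnormg : ∀ z t, ‖g z t‖ = ‖a‖ ^ z.1 * ‖c z.2‖ := by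
    intro z t
    simp [hg, norm_mul, norm_pow, norm_expI hI]
  -- Step 1: pointwise identity for the integrand
  have step1 : ∀ t : ℝ,
      star (s • ∑' n : ℕ, expI I (n * t) * (star a) ^ n) * Fc c (expI I t)
        = s • ∑' z : ℕ × ℕ, g z t := by
    intro t
    have hsum1 : Summable fun n : ℕ => ‖a ^ n * expI I (-(n * t))‖ := by
      simpa [norm_mul, norm_pow, norm_expI hI] using hgeo
    have hsum2 : Summable fun m : ℕ => ‖expI I (m * t) * c m‖ := by
      simpa [norm_mul, norm_expI hI] using hc
    have h1 : star (∑' n : ℕ, expI I (n * t) * (star a) ^ n)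
        = ∑' n : ℕ, a ^ n * expI I (-(n * t)) := by
      rw [tsum_star]
      exact tsum_congr fun n => by
        rw [star_mul, star_pow, star_star, star_expI hI]
    have h2 : Fc c (expI I t) = ∑' m : ℕ, expI I (m * t) * c m :=
      tsum_congr fun m => by rw [expI_pow hI]
    rw [star_real_smul, smul_mul_assoc, h1, h2,
      tsum_mul_tsum_of_summable_norm hsum1 hsum2]
    congr 1
    refine tsum_congr fun z => ?_
    rw [hg, mul_assoc, ← mul_assoc (expI I _), expI_mul hI, ← mul_assoc]
    congr 3
    push_cast; ring
  rw [intervalIntegral.integral_congr (fun t _ => step1 t),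
    intervalIntegral.integral_smul, intervalIntegral.integral_of_le hπ.le]
  set μ := MeasureTheory.volume.restrict (Set.Ioc (0:ℝ) (2 * Real.pi)) with hμ
  have hint : ∀ z, MeasureTheory.Integrable (g z) μ := by
    intro z
    apply Continuous.integrableOn_Ioc
    exact (continuous_const.mul
      (cont_expI.comp (continuous_const.mul continuous_id))).mul continuous_const
  have hnormint : ∀ z : ℕ × ℕ,
      (∫ t, ‖g z t‖ ∂μ) = (2 * Real.pi) * (‖a‖ ^ z.1 * ‖c z.2‖) := by
    intro z
    simp only [hnormg]
    rw [hμ, MeasureTheory.integral_const]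
    simp [Real.volume_Ioc, ENNReal.toReal_ofReal hπ.le, mul_assoc, max_eq_left hπ.le]
  have hSumInt : Summable fun z : ℕ × ℕ => ∫ t, ‖g z t‖ ∂μ := by
    simp only [hnormint]
    exact hprod.mul_left _
  rw [← MeasureTheory.integral_tsum_of_summable_integral_norm hint hSumInt]
  -- Step 3: compute each integral
  have hval : ∀ z : ℕ × ℕ,
      (∫ t, g z t ∂μ) = if z.2 = z.1 then (2 * Real.pi) • (a ^ z.1 * c z.1) else 0 := by
    intro z
    set k : ℤ := (z.2 : ℤ) - (z.1 : ℤ) with hk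
    have hexpint : MeasureTheory.Integrable (fun t => expI I ((k:ℝ) * t)) μ := by
      apply Continuous.integrableOn_Ioc
      exact cont_expI.comp (continuous_const.mul continuous_id)
    set L : ℍ →L[ℝ] ℍ :=
      ((ContinuousLinearMap.mul ℝ ℍ).flip (c z.2)).comp
        (ContinuousLinearMap.mul ℝ ℍ (a ^ z.1)) with hL
    have hLapp : ∀ x, L x = a ^ z.1 * x * c z.2 := fun x => by
      simp [hL]
    have hgL : ∀ t, g z t = L (expI I ((k:ℝ) * t)) := fun t => by
      rw [hLapp, hg]
    have hkint : (∫ t, expI I ((k:ℝ) * t) ∂μ) = if k = 0 then ((2*Real.pi:ℝ):ℍ) else 0 := by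
      rw [hμ, ← intervalIntegral.integral_of_le hπ.le]
      exact integral_expI I k
    calc (∫ t, g z t ∂μ) = ∫ t, L (expI I ((k:ℝ) * t)) ∂μ := by simp only [hgL]
      _ = L (∫ t, expI I ((k:ℝ) * t) ∂μ) := ContinuousLinearMap.integral_comp_comm L hexpint
      _ = _ := by
        rw [hkint]
        have hiff : k = 0 ↔ z.2 = z.1 := by
          rw [hk, sub_eq_zero, Int.natCast_inj]
        rcases eq_or_ne k 0 with h0 | h0
        · have hz : z.2 = z.1 := hiff.1 h0
          rw [if_pos h0, if_pos hz, hLapp, hz, Quaternion.mul_coe_eq_smul,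
            smul_mul_assoc]
        · rw [if_neg h0, if_neg (fun hz => h0 (hiff.2 hz))]
          simp [hLapp]
  rw [tsum_congr hval]
  -- Step 4: sum the diagonal
  have hdiag : Summable fun z : ℕ × ℕ =>
      (if z.2 = z.1 then (2 * Real.pi) • (a ^ z.1 * c z.1) else 0) := by
    apply Summable.of_norm_bounded (hprod.mul_left (2 * Real.pi))
    intro z
    rcases eq_or_ne z.2 z.1 with h | h
    · rw [if_pos h, h]
      calc ‖(2 * Real.pi) • (a ^ z.1 * c z.1)‖
          = 2 * Real.pi * ‖a ^ z.1 * c z.1‖ := by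
            rw [norm_smul, Real.norm_eq_abs, abs_of_pos hπ]
        _ ≤ 2 * Real.pi * (‖a‖ ^ z.1 * ‖c z.1‖) := by
            apply mul_le_mul_of_nonneg_left _ hπ.le
            rw [← norm_pow]
            exact norm_mul_le _ _
    · rw [if_neg h, norm_zero]
      positivity
  rw [Summable.tsum_prod' hdiag (fun n => hdiag.prod_factor n)]
  have hinner : ∀ n : ℕ,
      (∑' m : ℕ, if m = n then (2 * Real.pi) • (a ^ n * c n) else 0)
        = (2 * Real.pi) • (a ^ n * c n) := fun n => tsum_ite_eq n _
  simp only []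
  rw [tsum_congr hinner]
  have hFa : Summable fun n : ℕ => a ^ n * c n := by
    apply Summable.of_norm_bounded hc
    intro n
    rw [norm_mul, norm_pow]
    calc ‖a‖ ^ n * ‖c n‖ ≤ 1 * ‖c n‖ := by
          apply mul_le_mul_of_nonneg_right _ (norm_nonneg _)
          exact pow_le_one₀ (norm_nonneg a) ha.le
      _ = ‖c n‖ := one_mul _
  rw [Summable.tsum_const_smul (2 * Real.pi) hFa]
  rw [smul_comm s (2 * Real.pi), smul_smul, inv_mul_cancel₀ hπ.ne', one_smul]
  rfl
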